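/- Let c > 0 be a real number and let f : [1,∞) → ℝ be defined by f(x) = x^c. Then f satisfies both constraints — namely f(x) ≥ x for all 1 ≤ x < 2, and (y+1)·f(y) + f(x) ≥ (y+1)·x for all x ≥ 2 and all 1 ≤ y ≤ x — if and only if c ≥ (1+√5)/2. -/

import Mathlib

noncomputable def gr : ℝ := (1 + Real.sqrt 5) / 2

lemma sqrt5_sq : Real.sqrt 5 ^ 2 = 5 := Real.sq_sqrt (by norm_num)

lemma sqrt5_lb : 2 ≤ Real.sqrt 5 := by
  nlinarith [sqrt5_sq, Real.sqrt_nonneg 5]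

lemma sqrt5_ub : Real.sqrt 5 ≤ 3 := by
  nlinarith [sqrt5_sq, Real.sqrt_nonneg 5]

lemma gr_gt_one : 1 < gr := by unfold gr; nlinarith [sqrt5_lb]

lemma gr_le_two : gr ≤ 2 := by unfold gr; nlinarith [sqrt5_ub]

lemma gr_sq : gr * gr = gr + 1 := by
  unfold gr; nlinarith [sqrt5_sq]

lemma gr_conj : Real.HolderConjugate gr (gr + 1) := by
  rw [Real.holderConjugate_iff]
  constructor
  · exact gr_gt_one
  · have h1 : (0:ℝ) < gr := lt_trans one_pos gr_gt_one
    have h2 : (0:ℝ) < gr + 1 := by linarith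
    field_simp
    nlinarith [gr_sq]

/-- Core inequality at the golden ratio exponent. -/
lemma core_ineq (x y : ℝ) (hy : 1 ≤ y) (hx : 0 ≤ x) :
    (y + 1) * x ≤ x ^ gr + (y + 1) * y ^ gr := by
  have hφ1 : (1:ℝ) < gr := gr_gt_one
  have hφ0 : (0:ℝ) < gr := lt_trans one_pos hφ1
  set s : ℝ := gr ^ (1 / gr) with hs
  have hs0 : 0 < s := Real.rpow_pos_of_pos hφ0 _
  have hsφ : s ^ gr = gr := by
    rw [hs, ← Real.rpow_mul hφ0.le, one_div, inv_mul_cancel₀ hφ0.ne', Real.rpow_one]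
  have hsφ1 : s ^ (gr + 1) = gr ^ gr := by
    rw [hs, ← Real.rpow_mul hφ0.le]
    congr 1
    field_simp
    nlinarith [gr_sq]
  have hy0 : (0:ℝ) < y + 1 := by linarith
  have young := Real.young_inequality_of_nonneg
    (mul_nonneg hs0.le hx) (le_of_lt (div_pos hy0 hs0)) gr_conj
  have hab : (s * x) * ((y + 1) / s) = (y + 1) * x := by
    field_simp
  have h1 : (s * x) ^ gr / gr = x ^ gr := by
    rw [Real.mul_rpow hs0.le hx, hsφ]
    field_simp
  have h2 : ((y + 1) / s) ^ (gr + 1) = (y + 1) ^ (gr + 1) / gr ^ gr := by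
    rw [Real.div_rpow hy0.le hs0.le, hsφ1]
  -- key bound : (y+1)^(gr+1) / (gr^gr * (gr+1)) ≤ (y+1) * y^gr
  have hkey : (y + 1) ^ (gr + 1) / gr ^ gr / (gr + 1) ≤ (y + 1) * y ^ gr := by
    have hy1 : (0:ℝ) < y := by linarith
    have e1 : (y + 1) ^ (gr + 1) = (y + 1) ^ gr * (y + 1) := by
      rw [Real.rpow_add hy0, Real.rpow_one]
    have e2 : (y + 1) ^ gr ≤ 2 ^ gr * y ^ gr := by
      rw [← Real.mul_rpow (by norm_num) hy1.le]
      exact Real.rpow_le_rpow hy0.le (by linarith) hφ0.le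
    have e3 : (2:ℝ) ^ gr ≤ 4 := by
      have : (2:ℝ) ^ gr ≤ 2 ^ (2:ℝ) :=
        Real.rpow_le_rpow_of_exponent_le (by norm_num) gr_le_two
      have h4 : (2:ℝ) ^ (2:ℝ) = 4 := by
        rw [show (2:ℝ) = ((2:ℕ):ℝ) from by norm_num, Real.rpow_natCast]; norm_num
      linarith
    have e4 : (4:ℝ) ≤ gr ^ gr * (gr + 1) := by
      have : gr ^ (1:ℝ) ≤ gr ^ gr :=
        Real.rpow_le_rpow_of_exponent_le hφ1.le hφ1.le
      rw [Real.rpow_one] at this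
      have hg4 : (4:ℝ) ≤ gr * (gr + 1) := by
        unfold gr; nlinarith [sqrt5_sq, sqrt5_lb]
      nlinarith [hφ0]
    have hgg : 0 < gr ^ gr := Real.rpow_pos_of_pos hφ0 _
    have hyg : 0 < y ^ gr := Real.rpow_pos_of_pos hy1 _
    rw [div_div, div_le_iff₀ (by positivity), e1]
    calc (y + 1) ^ gr * (y + 1) ≤ (2 ^ gr * y ^ gr) * (y + 1) :=
          mul_le_mul_of_nonneg_right e2 hy0.le
      _ ≤ (4 * y ^ gr) * (y + 1) :=
          mul_le_mul_of_nonneg_right (mul_le_mul_of_nonneg_right e3 hyg.le) hy0.le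
      _ = 4 * (y ^ gr * (y + 1)) := by ring
      _ ≤ (gr ^ gr * (gr + 1)) * (y ^ gr * (y + 1)) :=
          mul_le_mul_of_nonneg_right e4 (by positivity)
      _ = (y + 1) * y ^ gr * (gr ^ gr * (gr + 1)) := by ring
  calc (y + 1) * x = (s * x) * ((y + 1) / s) := hab.symm
    _ ≤ (s * x) ^ gr / gr + ((y + 1) / s) ^ (gr + 1) / (gr + 1) := young
    _ = x ^ gr + (y + 1) ^ (gr + 1) / gr ^ gr / (gr + 1) := by rw [h1, h2]
    _ ≤ x ^ gr + (y + 1) * y ^ gr := by linarith [hkey]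

/-- f(x) = x^c satisfies the two constraints of the class X
if and only if c ≥ (1+√5)/2. -/
theorem rpow_mem_X_iff (c : ℝ) (hc : 0 < c) :
    ((∀ x : ℝ, 1 ≤ x → x < 2 → x ^ c ≥ x) ∧
      (∀ x y : ℝ, 2 ≤ x → 1 ≤ y → y ≤ x → (y + 1) * y ^ c + x ^ c ≥ (y + 1) * x)) ↔
    (1 + Real.sqrt 5) / 2 ≤ c := by
  constructor
  · rintro ⟨h1, h2⟩
    by_contra hlt
    push_neg at hlt
    -- first, c ≥ 1
    have hc1 : (1:ℝ) ≤ c := by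
      have h32 := h1 (3/2) (by norm_num) (by norm_num)
      have h32' : (3/2:ℝ) ^ (1:ℝ) ≤ (3/2:ℝ) ^ c := by
        rw [Real.rpow_one]; exact h32
      exact (Real.rpow_le_rpow_left_iff (by norm_num)).mp h32'
    set ε : ℝ := 1 + c - c * c with hεdef
    have hε : 0 < ε := by
      have : c < (1 + Real.sqrt 5) / 2 := hlt
      nlinarith [sqrt5_sq, sqrt5_lb, hc1]
    have h2c : (0:ℝ) < 2 ^ c := Real.rpow_pos_of_pos (by norm_num) c
    set y : ℝ := (2 ^ c + 1) ^ (1 / ε) with hydef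
    have hbase : (1:ℝ) ≤ 2 ^ c + 1 := by linarith
    have hy1 : 1 ≤ y := by
      have := Real.rpow_le_rpow (by norm_num : (0:ℝ) ≤ 1) hbase
        (by positivity : (0:ℝ) ≤ 1 / ε)
      rwa [Real.one_rpow] at this
    have hy0 : (0:ℝ) < y := by linarith
    have hyε : y ^ ε = 2 ^ c + 1 := by
      rw [hydef, ← Real.rpow_mul (by linarith), one_div,
        inv_mul_cancel₀ hε.ne', Real.rpow_one]
    have hyc1 : (1:ℝ) ≤ y ^ c := by
      have := Real.rpow_le_rpow (by norm_num : (0:ℝ) ≤ 1) hy1 hc.le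
      rwa [Real.one_rpow] at this
    have hyc0 : (0:ℝ) < y ^ c := by linarith
    set x : ℝ := 2 * y ^ c with hxdef
    have hx2 : (2:ℝ) ≤ x := by rw [hxdef]; linarith
    have hyx : y ≤ x := by
      have : y ^ (1:ℝ) ≤ y ^ c := Real.rpow_le_rpow_of_exponent_le hy1 hc1
      rw [Real.rpow_one] at this
      rw [hxdef]; linarith
    have H := h2 x y hx2 hy1 hyx
    have hxc : x ^ c = 2 ^ c * y ^ (c * c) := by
      rw [hxdef, Real.mul_rpow (by norm_num) hyc0.le, Real.rpow_mul hy0.le]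
    -- from H : x^c ≥ (y+1) * y^c
    have H2 : 2 ^ c * y ^ (c * c) ≥ (y + 1) * y ^ c := by
      rw [← hxc]
      have : (y + 1) * x = 2 * ((y + 1) * y ^ c) := by rw [hxdef]; ring
      linarith [H, this ▸ H]
    -- but (y+1)*y^c > y * y^c = y^(1+c) = y^(c*c) * y^ε = y^(c*c) * (2^c+1)
    have hsplit : y ^ ((1:ℝ) + c) = y ^ (c * c) * y ^ ε := by
      rw [← Real.rpow_add hy0]; congr 1; rw [hεdef]; ring
    have hyc : y * y ^ c = y ^ ((1:ℝ) + c) := by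
      rw [Real.rpow_add hy0, Real.rpow_one]
    have hcc0 : (0:ℝ) < y ^ (c * c) := Real.rpow_pos_of_pos hy0 _
    have : 2 ^ c * y ^ (c * c) > (2 ^ c + 1) * y ^ (c * c) := by
      calc 2 ^ c * y ^ (c * c) ≥ (y + 1) * y ^ c := H2
        _ > y * y ^ c := by nlinarith [hyc0]
        _ = y ^ (c * c) * y ^ ε := by rw [hyc, hsplit]
        _ = (2 ^ c + 1) * y ^ (c * c) := by rw [hyε]; ring
    nlinarith [hcc0, this]
  · intro hφc
    have hgr : gr ≤ c := hφc
    have hc1 : (1:ℝ) ≤ c := le_trans gr_gt_one.le hgr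
    constructor
    · intro x hx _
      have : x ^ (1:ℝ) ≤ x ^ c := Real.rpow_le_rpow_of_exponent_le hx hc1
      rwa [Real.rpow_one] at this
    · intro x y hx2 hy1 hyx
      have hx1 : (1:ℝ) ≤ x := by linarith
      have hcore := core_ineq x y hy1 (by linarith)
      have e1 : x ^ gr ≤ x ^ c := Real.rpow_le_rpow_of_exponent_le hx1 hgr
      have e2 : y ^ gr ≤ y ^ c := Real.rpow_le_rpow_of_exponent_le hy1 hgr
      have e3 : (y + 1) * y ^ gr ≤ (y + 1) * y ^ c :=
        mul_le_mul_of_nonneg_left e2 (by linarith)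
      linarith
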